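/- Let x ∈ ℂ^N and w ∈ ℂ^W with N > L and W > L, and suppose x[i] ≠ 0 and w[i] ≠ 0 for all 0 ≤ i ≤ L. Suppose η_1, η_2 ∈ ℂ with |η_1| = |η_2| = 1 and nonzero complex numbers λ = (λ_0,…,λ_{L−1}) satisfy (η_1,η_2,λ)∘(x,w) = (x,w). Then η_1 = 1, η_2^L = 1, and λ_j = η_2^{−j} for every j = 0,…,L−1. In other words, the stabilizer of such a pair (x,w) under this action is the subgroup {(1, ω, (1, ω^{−1},…,ω^{−(L−1)})) : ω^L = 1}, isomorphic to the group μ_L of L-th roots of unity, so the quotient of S¹ × S¹ × (ℂ^×)^L by μ_L acts generically freely. -/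

import Mathlib

open Complex BigOperators

/-- the stabilizer of a pair `(x,w)` (with `x[i] ≠ 0`, `w[i] ≠ 0`
for `0 ≤ i ≤ L`) under the action
`(η₁,η₂,λ)∘(x,w) = (n ↦ η₁·η₂ⁿ·λ_{n mod L}·x[n], n ↦ η₂ⁿ·λ_{(L−n) mod L}⁻¹·w[n])`
consists exactly of the elements with `η₁ = 1`, `η₂^L = 1` and `λ_j = η₂^{−j}`,
i.e. it is isomorphic to `μ_L`, so the quotient of `S¹ × S¹ × (ℂ^×)^L` by `μ_L`
acts generically freely. -/
theorem blind_stft_stabilizer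
    {N W L : ℕ} (hL : 0 < L) (hLN : L < N) (hLW : L < W)
    (x : Fin N → ℂ) (w : Fin W → ℂ)
    (hxw : ∀ i : ℕ, ∀ _ : i ≤ L, x ⟨i, by omega⟩ ≠ 0 ∧ w ⟨i, by omega⟩ ≠ 0)
    (η₁ η₂ : ℂ) (hη₁ : ‖η₁‖ = 1) (hη₂ : ‖η₂‖ = 1)
    (lam : Fin L → ℂ) (hlam : ∀ j, lam j ≠ 0)
    (hfixx : ∀ n : Fin N,
      η₁ * η₂ ^ (n : ℕ) * lam ⟨(n : ℕ) % L, Nat.mod_lt _ hL⟩ * x n = x n)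
    (hfixw : ∀ n : Fin W,
      η₂ ^ (n : ℕ) * (lam ⟨(L - (n : ℕ) % L) % L, Nat.mod_lt _ hL⟩)⁻¹ * w n = w n) :
    η₁ = 1 ∧ η₂ ^ L = 1 ∧ ∀ j : Fin L, lam j = (η₂ ^ (j : ℕ))⁻¹ := by
  -- key equation from hfixx
  have key : ∀ i : ℕ, i ≤ L → η₁ * η₂ ^ i * lam ⟨i % L, Nat.mod_lt _ hL⟩ = 1 := by
    intro i hi
    have h := hfixx ⟨i, by omega⟩
    simp only [] at h
    have hx := (hxw i hi).1
    have : (η₁ * η₂ ^ i * lam ⟨i % L, Nat.mod_lt _ hL⟩) * x ⟨i, by omega⟩ =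
        1 * x ⟨i, by omega⟩ := by rw [one_mul]; exact h
    exact mul_right_cancel₀ hx this
  -- lam 0 = 1 from hfixw at n = 0
  have hlam0 : lam ⟨0, hL⟩ = 1 := by
    have h := hfixw ⟨0, by omega⟩
    have hw := (hxw 0 (Nat.zero_le _)).2
    simp only [pow_zero, one_mul, Nat.zero_mod, Nat.sub_zero, Nat.mod_self] at h
    have hinv : (lam ⟨0, hL⟩)⁻¹ = 1 := mul_right_cancel₀ hw (by rw [one_mul]; exact h)
    have := hlam ⟨0, hL⟩
    field_simp at hinv
    exact hinv.symm
  have h0 := key 0 (Nat.zero_le _)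
  simp only [pow_zero, mul_one, Nat.zero_mod] at h0
  rw [hlam0, mul_one] at h0
  have hη₂ne : η₂ ≠ 0 := by
    intro h; rw [h] at hη₂; simp at hη₂
  refine ⟨h0, ?_, ?_⟩
  · have hLkey := key L le_rfl
    rw [h0, one_mul] at hLkey
    have he : (⟨L % L, Nat.mod_lt _ hL⟩ : Fin L) = ⟨0, hL⟩ := by ext; simp
    rw [he, hlam0, mul_one] at hLkey
    exact hLkey
  · intro j
    have hj := key j (le_of_lt j.isLt)
    rw [h0, one_mul] at hj
    have : (⟨(j : ℕ) % L, Nat.mod_lt _ hL⟩ : Fin L) = j := by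
      ext; simp [Nat.mod_eq_of_lt j.isLt]
    rw [this] at hj
    exact eq_inv_of_mul_eq_one_right hj
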